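/- Hadamard-power bound: for any function f : 𝒳^M × 𝒳^M → ℝ^{n×m} with sep(f) = k_f and every k ∈ ℕ, sep(f^{⊙k}) ≤ C(k + k_f − 1, k) (the binomial coefficient); in particular sep(f^{⊙2}) ≤ C(k_f + 1, 2). -/

import Mathlib

open scoped BigOperators

/-- Separation rank of a scalar-valued function of two groups of variables. -/
noncomputable def sepRank {𝒳 : Type*} {M : ℕ}
    (y : (Fin M → 𝒳) → (Fin M → 𝒳) → ℝ) : ℕ∞ :=
  sInf {R : ℕ∞ | ∃ r : ℕ, R = (r : ℕ∞) ∧ ∃ g g' : Fin r → (Fin M → 𝒳) → ℝ,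
    ∀ A B, y A B = ∑ i, g i A * g' i B}

/-- Separation rank of a matrix-valued function: maximum over output entries. -/
noncomputable def sepRankM {𝒳 : Type*} {M n m : ℕ}
    (f : (Fin M → 𝒳) → (Fin M → 𝒳) → Matrix (Fin n) (Fin m) ℝ) : ℕ∞ :=
  ⨆ i : Fin n, ⨆ j : Fin m, sepRank (fun A B => f A B i j)

lemma sepRank_le_of_repr {𝒳 : Type*} {M : ℕ}
    {y : (Fin M → 𝒳) → (Fin M → 𝒳) → ℝ} {r : ℕ}
    (g g' : Fin r → (Fin M → 𝒳) → ℝ)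
    (h : ∀ A B, y A B = ∑ i, g i A * g' i B) :
    sepRank y ≤ (r : ℕ∞) :=
  sInf_le ⟨r, rfl, g, g', h⟩

lemma sepRank_le_of_repr_fintype {𝒳 : Type*} {M : ℕ}
    {y : (Fin M → 𝒳) → (Fin M → 𝒳) → ℝ} {ι : Type*} [Fintype ι]
    (g g' : ι → (Fin M → 𝒳) → ℝ)
    (h : ∀ A B, y A B = ∑ i, g i A * g' i B) :
    sepRank y ≤ (Fintype.card ι : ℕ∞) := by
  classical
  let e : Fin (Fintype.card ι) ≃ ι := (Fintype.equivFin ι).symm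
  refine sepRank_le_of_repr (fun i => g (e i)) (fun i => g' (e i)) (fun A B => ?_)
  rw [h A B]
  exact (Equiv.sum_comp e (fun i => g i A * g' i B)).symm

lemma exists_repr_of_sepRank_eq {𝒳 : Type*} {M : ℕ}
    {y : (Fin M → 𝒳) → (Fin M → 𝒳) → ℝ} {k : ℕ}
    (h : sepRank y ≤ (k : ℕ∞)) :
    ∃ r : ℕ, r ≤ k ∧ ∃ g g' : Fin r → (Fin M → 𝒳) → ℝ,
      ∀ A B, y A B = ∑ i, g i A * g' i B := by
  have hne : {R : ℕ∞ | ∃ r : ℕ, R = (r : ℕ∞) ∧ ∃ g g' : Fin r → (Fin M → 𝒳) → ℝ,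
      ∀ A B, y A B = ∑ i, g i A * g' i B}.Nonempty := by
    by_contra hemp
    rw [Set.not_nonempty_iff_eq_empty] at hemp
    have : sepRank y = ⊤ := by rw [sepRank, hemp, sInf_empty]
    rw [this] at h
    exact absurd (top_le_iff.mp h) (by simp)
  have hmem := csInf_mem hne
  obtain ⟨r, hr, g, g', hgg⟩ := hmem
  refine ⟨r, ?_, g, g', hgg⟩
  have : sepRank y = (r : ℕ∞) := hr
  rw [this] at h
  exact_mod_cast h

lemma entry_pow_bound {𝒳 : Type*} {M : ℕ}
    {y : (Fin M → 𝒳) → (Fin M → 𝒳) → ℝ} {k_f : ℕ}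
    (h : sepRank y ≤ (k_f : ℕ∞)) (k : ℕ) :
    sepRank (fun A B => (y A B) ^ k) ≤ (((k + k_f - 1).choose k : ℕ) : ℕ∞) := by
  classical
  obtain ⟨r, hr, g, g', hgg⟩ := exists_repr_of_sepRank_eq h
  set s : Finset (Sym (Fin r) k) := (Finset.univ : Finset (Fin r)).sym k with hs
  have key : ∀ A B, (y A B) ^ k =
      ∑ σ : s, ((σ.1.1.countPerms : ℝ) * (σ.1.1.map (fun i => g i A)).prod) *
        (σ.1.1.map (fun i => g' i B)).prod := by
    intro A B
    rw [hgg A B]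
    rw [show (∑ i, g i A * g' i B) = Finset.univ.sum (fun i => g i A * g' i B) from rfl]
    rw [Finset.sum_pow]
    rw [← Finset.sum_coe_sort]
    refine Finset.sum_congr rfl (fun σ _ => ?_)
    rw [mul_assoc]
    congr 1
    rw [← Multiset.prod_map_mul]
  have card_le : Fintype.card s ≤ (k + k_f - 1).choose k := by
    have h1 : Fintype.card s = s.card := Fintype.card_coe s
    have h2 : s.card ≤ Fintype.card (Sym (Fin r) k) := Finset.card_le_univ s
    have h3 : Fintype.card (Sym (Fin r) k) = (r + k - 1).choose k := by
      rw [Sym.card_sym_eq_choose, Fintype.card_fin]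
    have h4 : (r + k - 1).choose k ≤ (k + k_f - 1).choose k := by
      apply Nat.choose_le_choose
      omega
    omega
  calc sepRank (fun A B => (y A B) ^ k)
      ≤ (Fintype.card s : ℕ∞) :=
        sepRank_le_of_repr_fintype _ _ key
    _ ≤ (((k + k_f - 1).choose k : ℕ) : ℕ∞) := by exact_mod_cast card_le

/-- Hadamard-power bound on the separation rank. -/
theorem sepRank_hadamard_pow {𝒳 : Type*} {M n m : ℕ}
    (f : (Fin M → 𝒳) → (Fin M → 𝒳) → Matrix (Fin n) (Fin m) ℝ)
    (k_f : ℕ) (hf : sepRankM f = (k_f : ℕ∞)) :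
    (∀ k : ℕ,
      sepRankM (fun A B => Matrix.of fun i j => (f A B i j) ^ k)
        ≤ ((k + k_f - 1).choose k : ℕ∞)) ∧
    sepRankM (fun A B => Matrix.of fun i j => (f A B i j) ^ 2)
        ≤ ((k_f + 1).choose 2 : ℕ∞) := by
  have hentry : ∀ (i : Fin n) (j : Fin m),
      sepRank (fun A B => f A B i j) ≤ (k_f : ℕ∞) := by
    intro i j
    calc sepRank (fun A B => f A B i j)
        ≤ sepRankM f := le_iSup_of_le i (le_iSup_of_le j le_rfl)
      _ = (k_f : ℕ∞) := hf
  have main : ∀ k : ℕ,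
      sepRankM (fun A B => Matrix.of fun i j => (f A B i j) ^ k)
        ≤ ((k + k_f - 1).choose k : ℕ∞) := by
    intro k
    refine iSup_le fun i => iSup_le fun j => ?_
    simpa using entry_pow_bound (hentry i j) k
  refine ⟨main, ?_⟩
  have := main 2
  have heq : (2 + k_f - 1).choose 2 = (k_f + 1).choose 2 := by
    congr 1; omega
  rwa [heq] at this
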